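/- Let K = {0, 1, 3, 5, 6}. Then the system A(K) has a nontrivial bounded complex solution, but it has no nontrivial periodic complex solution. Equivalently, the polynomial X^6 + X^5 + X^3 + X + 1 has a complex root of modulus 1, but none of its complex roots is a root of unity. -/

import Mathlib

open Polynomial

/-- Certificates: for each small `d`, `z^6+z^5+z^3+z+1 = 0` and `z^d = 1` are contradictory. -/
lemma aux_cases13 (z : ℂ) (hp : z ^ 6 + z ^ 5 + z ^ 3 + z + 1 = 0) (d : ℕ)
    (hmem : d ∈ ({1,2,3,4,5,6,7,8,9,10,12,14,18} : Finset ℕ)) (hd : z ^ d = 1) : False := by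
  fin_cases hmem
  · exact one_ne_zero (by linear_combination ((1/5 : ℂ)) * hp + ((-4/5 : ℂ) + (-3/5 : ℂ) * z ^ 1 + (-3/5 : ℂ) * z ^ 2 + (-2/5 : ℂ) * z ^ 3 + (-2/5 : ℂ) * z ^ 4 + (-1/5 : ℂ) * z ^ 5) * hd)
  · exact one_ne_zero (by linear_combination ((-2/5 : ℂ) + (3/5 : ℂ) * z ^ 1) * hp + ((-7/5 : ℂ) + (1/5 : ℂ) * z ^ 1 + (-4/5 : ℂ) * z ^ 2 + (-1/5 : ℂ) * z ^ 3 + (-1/5 : ℂ) * z ^ 4 + (-3/5 : ℂ) * z ^ 5) * hd)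
  · exact one_ne_zero (by linear_combination ((2/5 : ℂ) + (-1/10 : ℂ) * z ^ 1 + (-1/10 : ℂ) * z ^ 2) * hp + ((-3/5 : ℂ) + (3/10 : ℂ) * z ^ 1 + (-1/5 : ℂ) * z ^ 2 + (-3/10 : ℂ) * z ^ 3 + (1/5 : ℂ) * z ^ 4 + (1/10 : ℂ) * z ^ 5) * hd)
  · exact one_ne_zero (by linear_combination ((-1/5 : ℂ) + (-1/5 : ℂ) * z ^ 1 + (-1/5 : ℂ) * z ^ 2 + (4/5 : ℂ) * z ^ 3) * hp + ((-6/5 : ℂ) + (-2/5 : ℂ) * z ^ 1 + (-2/5 : ℂ) * z ^ 2 + (2/5 : ℂ) * z ^ 3 + (-3/5 : ℂ) * z ^ 4 + (-4/5 : ℂ) * z ^ 5) * hd)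
  · exact one_ne_zero (by linear_combination ((6/25 : ℂ) + (-4/25 : ℂ) * z ^ 1 + (1/25 : ℂ) * z ^ 2 + (-4/25 : ℂ) * z ^ 3 + (6/25 : ℂ) * z ^ 4) * hp + ((-19/25 : ℂ) + (2/25 : ℂ) * z ^ 1 + (-3/25 : ℂ) * z ^ 2 + (3/25 : ℂ) * z ^ 3 + (-2/25 : ℂ) * z ^ 4 + (-6/25 : ℂ) * z ^ 5) * hd)
  · exact one_ne_zero (by linear_combination ((1/5 : ℂ) + (1/5 : ℂ) * z ^ 1 + (-3/10 : ℂ) * z ^ 2 + (1/5 : ℂ) * z ^ 3 + (-3/10 : ℂ) * z ^ 4 + (1/5 : ℂ) * z ^ 5) * hp + ((-4/5 : ℂ) + (2/5 : ℂ) * z ^ 1 + (-1/10 : ℂ) * z ^ 2 + (1/10 : ℂ) * z ^ 3 + (1/10 : ℂ) * z ^ 4 + (-1/5 : ℂ) * z ^ 5) * hd)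
  · exact one_ne_zero (by linear_combination ((3/5 : ℂ) + (3/5 : ℂ) * z ^ 1 + (-2/5 : ℂ) * z ^ 2 + (-2/5 : ℂ) * z ^ 3 + (3/5 : ℂ) * z ^ 4 + (-2/5 : ℂ) * z ^ 5 + (-2/5 : ℂ) * z ^ 6) * hp + ((-2/5 : ℂ) + (6/5 : ℂ) * z ^ 1 + (1/5 : ℂ) * z ^ 2 + (-1/5 : ℂ) * z ^ 3 + (4/5 : ℂ) * z ^ 4 + (2/5 : ℂ) * z ^ 5) * hd)
  · exact one_ne_zero (by linear_combination ((2/5 : ℂ) + (2/5 : ℂ) * z ^ 1 + (2/5 : ℂ) * z ^ 2 + (2/5 : ℂ) * z ^ 3 + (-3/5 : ℂ) * z ^ 4 + (-3/5 : ℂ) * z ^ 5 + (-3/5 : ℂ) * z ^ 6 + (2/5 : ℂ) * z ^ 7) * hp + ((-3/5 : ℂ) + (4/5 : ℂ) * z ^ 1 + (4/5 : ℂ) * z ^ 2 + (6/5 : ℂ) * z ^ 3 + (1/5 : ℂ) * z ^ 4 + (-2/5 : ℂ) * z ^ 5) * hd)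
  · exact one_ne_zero (by linear_combination ((-1/5 : ℂ) + (-7/10 : ℂ) * z ^ 1 + (-7/10 : ℂ) * z ^ 2 + (-1/5 : ℂ) * z ^ 3 + (3/10 : ℂ) * z ^ 4 + (3/10 : ℂ) * z ^ 5 + (4/5 : ℂ) * z ^ 6 + (3/10 : ℂ) * z ^ 7 + (3/10 : ℂ) * z ^ 8) * hp + ((-6/5 : ℂ) + (-9/10 : ℂ) * z ^ 1 + (-7/5 : ℂ) * z ^ 2 + (-11/10 : ℂ) * z ^ 3 + (-3/5 : ℂ) * z ^ 4 + (-3/10 : ℂ) * z ^ 5) * hd)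
  · exact one_ne_zero (by linear_combination ((3/25 : ℂ) + (-2/25 : ℂ) * z ^ 1 + (-12/25 : ℂ) * z ^ 2 + (-2/25 : ℂ) * z ^ 3 + (3/25 : ℂ) * z ^ 4 + (3/25 : ℂ) * z ^ 5 + (-2/25 : ℂ) * z ^ 6 + (13/25 : ℂ) * z ^ 7 + (-2/25 : ℂ) * z ^ 8 + (3/25 : ℂ) * z ^ 9) * hp + ((-22/25 : ℂ) + (1/25 : ℂ) * z ^ 1 + (-14/25 : ℂ) * z ^ 2 + (-11/25 : ℂ) * z ^ 3 + (-1/25 : ℂ) * z ^ 4 + (-3/25 : ℂ) * z ^ 5) * hd)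
  · exact one_ne_zero (by linear_combination ((1/10 : ℂ) + (-3/20 : ℂ) * z ^ 1 + (-3/20 : ℂ) * z ^ 2 + (1/10 : ℂ) * z ^ 3 + (-3/20 : ℂ) * z ^ 4 + (-3/20 : ℂ) * z ^ 5 + (1/10 : ℂ) * z ^ 6 + (7/20 : ℂ) * z ^ 7 + (-3/20 : ℂ) * z ^ 8 + (1/10 : ℂ) * z ^ 9 + (-3/20 : ℂ) * z ^ 10 + (7/20 : ℂ) * z ^ 11) * hp + ((-9/10 : ℂ) + (-1/20 : ℂ) * z ^ 1 + (-3/10 : ℂ) * z ^ 2 + (1/20 : ℂ) * z ^ 3 + (-1/5 : ℂ) * z ^ 4 + (-7/20 : ℂ) * z ^ 5) * hd)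
  · exact one_ne_zero (by linear_combination ((22/65 : ℂ) + (17/65 : ℂ) * z ^ 1 + (-23/65 : ℂ) * z ^ 2 + (-8/65 : ℂ) * z ^ 3 + (12/65 : ℂ) * z ^ 4 + (-8/65 : ℂ) * z ^ 5 + (-23/65 : ℂ) * z ^ 6 + (17/65 : ℂ) * z ^ 7 + (22/65 : ℂ) * z ^ 8 + (-3/65 : ℂ) * z ^ 9 + (-18/65 : ℂ) * z ^ 10 + (27/65 : ℂ) * z ^ 11 + (-18/65 : ℂ) * z ^ 12 + (-3/65 : ℂ) * z ^ 13) * hp + ((-43/65 : ℂ) + (3/5 : ℂ) * z ^ 1 + (-6/65 : ℂ) * z ^ 2 + (-9/65 : ℂ) * z ^ 3 + (21/65 : ℂ) * z ^ 4 + (3/65 : ℂ) * z ^ 5) * hd)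
  · exact one_ne_zero (by linear_combination ((2/5 : ℂ) + (2/5 : ℂ) * z ^ 1 + (-11/10 : ℂ) * z ^ 2 + (-3/5 : ℂ) * z ^ 3 + (9/10 : ℂ) * z ^ 4 + (2/5 : ℂ) * z ^ 5 + (-3/5 : ℂ) * z ^ 6 + (2/5 : ℂ) * z ^ 7 + (9/10 : ℂ) * z ^ 8 + (-3/5 : ℂ) * z ^ 9 + (-11/10 : ℂ) * z ^ 10 + (2/5 : ℂ) * z ^ 11 + (2/5 : ℂ) * z ^ 12 + (-3/5 : ℂ) * z ^ 13 + (-1/10 : ℂ) * z ^ 14 + (7/5 : ℂ) * z ^ 15 + (-1/10 : ℂ) * z ^ 16 + (-3/5 : ℂ) * z ^ 17) * hp + ((-3/5 : ℂ) + (4/5 : ℂ) * z ^ 1 + (-7/10 : ℂ) * z ^ 2 + (-13/10 : ℂ) * z ^ 3 + (7/10 : ℂ) * z ^ 4 + (3/5 : ℂ) * z ^ 5) * hd)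

lemma aux_dvd_2520 {d : ℕ} (hd : 0 < d) (h : d.totient ≤ 6) : d ∣ 2520 := by
  rw [← Nat.factorization_prime_le_iff_dvd hd.ne' (by norm_num)]
  intro p hpp
  rw [← Nat.Prime.pow_dvd_iff_le_factorization hpp (by norm_num)]
  rcases Nat.eq_zero_or_pos (d.factorization p) with hk0 | hk1
  · rw [hk0]; exact one_dvd _
  · set k := d.factorization p with hk
    have hpk : (p ^ k).totient ∣ d.totient := Nat.totient_dvd_of_dvd (Nat.ordProj_dvd d p)
    have h6 : (p ^ k).totient ≤ 6 :=
      le_trans (Nat.le_of_dvd (Nat.totient_pos.2 hd) hpk) h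
    rw [Nat.totient_prime_pow hpp hk1] at h6
    have hpow1 : 1 ≤ p ^ (k - 1) := Nat.one_le_pow _ _ hpp.pos
    have hp1 : p - 1 ≤ 6 := by nlinarith [hpow1, h6]
    have hp2 : 2 ≤ p := hpp.two_le
    have hp7 : p ≤ 7 := by omega
    interval_cases p
    · -- p = 2
      have hk3 : k ≤ 3 := by
        by_contra hc
        have : 2 ^ 3 ≤ 2 ^ (k - 1) := Nat.pow_le_pow_right (by norm_num) (by omega)
        omega
      exact dvd_trans (pow_dvd_pow 2 hk3) (by norm_num)
    · -- p = 3
      have hk2 : k ≤ 2 := by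
        by_contra hc
        have : 3 ^ 2 ≤ 3 ^ (k - 1) := Nat.pow_le_pow_right (by norm_num) (by omega)
        omega
      exact dvd_trans (pow_dvd_pow 3 hk2) (by norm_num)
    · exact absurd hpp (by norm_num)
    · -- p = 5
      have hk1' : k ≤ 1 := by
        by_contra hc
        have : 5 ^ 1 ≤ 5 ^ (k - 1) := Nat.pow_le_pow_right (by norm_num) (by omega)
        omega
      exact dvd_trans (pow_dvd_pow 5 hk1') (by norm_num)
    · exact absurd hpp (by norm_num)
    · -- p = 7
      have hk1' : k ≤ 1 := by
        by_contra hc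
        have : 7 ^ 1 ≤ 7 ^ (k - 1) := Nat.pow_le_pow_right (by norm_num) (by omega)
        omega
      exact dvd_trans (pow_dvd_pow 7 hk1') (by norm_num)

set_option maxRecDepth 100000 in
lemma aux_divisor_cases : ∀ e ∈ Nat.divisors 2520, e.totient ≤ 6 →
    e ∈ ({1,2,3,4,5,6,7,8,9,10,12,14,18} : Finset ℕ) := by decide

/-- No root of `X^6+X^5+X^3+X+1` is a root of unity. -/
lemma aux_no_root_of_unity : ∀ z : ℂ, z ^ 6 + z ^ 5 + z ^ 3 + z + 1 = 0 →
    ¬ ∃ m : ℕ, 0 < m ∧ z ^ m = 1 := by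
  rintro z hp ⟨m, hm, hzm⟩
  have hfin : IsOfFinOrder z := isOfFinOrder_iff_pow_eq_one.2 ⟨m, hm, hzm⟩
  have hdpos : 0 < orderOf z := orderOf_pos_iff.2 hfin
  have hprim : IsPrimitiveRoot z (orderOf z) := IsPrimitiveRoot.orderOf z
  have hmin : cyclotomic (orderOf z) ℚ = minpoly ℚ z :=
    Polynomial.cyclotomic_eq_minpoly_rat hprim hdpos
  have haev : (aeval z) ((X : ℚ[X]) ^ 6 + X ^ 5 + X ^ 3 + X + 1) = 0 := by
    simpa using hp
  have hdvd := minpoly.dvd ℚ z haev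
  rw [← hmin] at hdvd
  have hP0 : ((X : ℚ[X]) ^ 6 + X ^ 5 + X ^ 3 + X + 1) ≠ 0 := by
    intro h
    have := congrArg (eval 0) h
    simp at this
  have hdeg := Polynomial.natDegree_le_of_dvd hdvd hP0
  rw [Polynomial.natDegree_cyclotomic] at hdeg
  have hdeg6 : ((X : ℚ[X]) ^ 6 + X ^ 5 + X ^ 3 + X + 1).natDegree = 6 := by
    compute_degree!
  rw [hdeg6] at hdeg
  have hzd : z ^ orderOf z = 1 := pow_orderOf_eq_one z
  have hmem : orderOf z ∈ Nat.divisors 2520 :=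
    Nat.mem_divisors.2 ⟨aux_dvd_2520 hdpos hdeg, by norm_num⟩
  exact aux_cases13 z hp (orderOf z) (aux_divisor_cases _ hmem hdeg) hzd

/-- The polynomial has a root of modulus one. -/
lemma aux_root_mod_one : ∃ z : ℂ, ‖z‖ = 1 ∧ z ^ 6 + z ^ 5 + z ^ 3 + z + 1 = 0 := by
  have h0 : (0 : ℝ) ≤ Real.pi / 2 := by positivity
  have hcont : ContinuousOn (fun θ : ℝ => 2 * Real.cos (3 * θ) + 2 * Real.cos (2 * θ) + 1)
      (Set.Icc 0 (Real.pi / 2)) := by fun_prop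
  have c1 : Real.cos (3 * (Real.pi / 2)) = 0 := by
    rw [show 3 * (Real.pi / 2) = Real.pi + Real.pi / 2 by ring, Real.cos_add,
      Real.cos_pi_div_two, Real.sin_pi]
    ring
  have c2 : Real.cos (2 * (Real.pi / 2)) = -1 := by
    rw [show 2 * (Real.pi / 2) = Real.pi by ring, Real.cos_pi]
  have hmem : (0 : ℝ) ∈ Set.Icc
      ((fun θ : ℝ => 2 * Real.cos (3 * θ) + 2 * Real.cos (2 * θ) + 1) (Real.pi / 2))
      ((fun θ : ℝ => 2 * Real.cos (3 * θ) + 2 * Real.cos (2 * θ) + 1) 0) := by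
    constructor
    · simp only [c1, c2]; norm_num
    · simp only [mul_zero, Real.cos_zero]; norm_num
  obtain ⟨θ, _, hθ⟩ := intermediate_value_Icc' h0 hcont hmem
  set e := Complex.exp (θ * Complex.I) with he_def
  have he : e ≠ 0 := Complex.exp_ne_zero _
  have h2cos : ∀ t : ℝ, Complex.exp ((t : ℂ) * Complex.I) +
      (Complex.exp ((t : ℂ) * Complex.I))⁻¹ = 2 * (Real.cos t : ℂ) := by
    intro t
    rw [← Complex.exp_neg, show -((t : ℂ) * Complex.I) = ((-t : ℝ) : ℂ) * Complex.I by
      push_cast; ring, Complex.exp_mul_I, Complex.exp_mul_I, Complex.ofReal_cos]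
    push_cast
    simp [Complex.cos_neg, Complex.sin_neg]
    ring
  have hpowk : ∀ t : ℝ, ∀ k : ℕ, (t : ℂ) = k * θ → Complex.exp ((t : ℂ) * Complex.I) = e ^ k := by
    intro t k ht
    rw [he_def, ← Complex.exp_nat_mul, ht]
    ring_nf
  have h3 : e ^ 3 + (e ^ 3)⁻¹ = 2 * (Real.cos (3 * θ) : ℂ) := by
    rw [← hpowk (3 * θ) 3 (by push_cast; ring)]
    exact h2cos (3 * θ)
  have h2 : e ^ 2 + (e ^ 2)⁻¹ = 2 * (Real.cos (2 * θ) : ℂ) := by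
    rw [← hpowk (2 * θ) 2 (by push_cast; ring)]
    exact h2cos (2 * θ)
  have hC : 2 * (Real.cos (3 * θ) : ℂ) + 2 * (Real.cos (2 * θ) : ℂ) + 1 = 0 := by
    have := congrArg (fun r : ℝ => (r : ℂ)) hθ
    push_cast at this
    push_cast; linear_combination this
  have hi3 : e ^ 3 * (e ^ 3)⁻¹ = 1 := mul_inv_cancel₀ (pow_ne_zero _ he)
  have hi2 : e ^ 2 * (e ^ 2)⁻¹ = 1 := mul_inv_cancel₀ (pow_ne_zero _ he)
  refine ⟨e, Complex.norm_exp_ofReal_mul_I θ, ?_⟩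
  linear_combination (e ^ 3) * hC + (e ^ 3) * h3 + (e ^ 3) * h2 - hi3 - e * hi2

/-- The shift operator on two-sided sequences. -/
noncomputable def auxS : (ℤ → ℂ) →ₗ[ℂ] (ℤ → ℂ) where
  toFun x := fun n => x (n + 1)
  map_add' := by intros; rfl
  map_smul' := by intros; rfl

lemma auxS_pow : ∀ (k : ℕ) (x : ℤ → ℂ) (n : ℤ), (auxS ^ k) x n = x (n + k) := by
  intro k
  induction k with
  | zero => intro x n; simp
  | succ k ih =>
    intro x n
    rw [pow_succ, Module.End.mul_apply, ih]
    show x (n + k + 1) = x (n + (k + 1 : ℕ))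
    congr 1
    push_cast
    ring

theorem stmt_10 :
    (∃ x : ℤ → ℂ, x ≠ 0 ∧ (∃ M : ℝ, ∀ n : ℤ, ‖x n‖ ≤ M) ∧
        ∀ n : ℤ, ∑ s ∈ ({0, 1, 3, 5, 6} : Finset ℕ), x (n + (s : ℤ)) = 0) ∧
    (¬ ∃ x : ℤ → ℂ, x ≠ 0 ∧ (∃ p : ℤ, 1 ≤ p ∧ ∀ n : ℤ, x (n + p) = x n) ∧
        ∀ n : ℤ, ∑ s ∈ ({0, 1, 3, 5, 6} : Finset ℕ), x (n + (s : ℤ)) = 0) ∧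
    (∃ z : ℂ, ‖z‖ = 1 ∧ z ^ 6 + z ^ 5 + z ^ 3 + z + 1 = 0) ∧
    (∀ z : ℂ, z ^ 6 + z ^ 5 + z ^ 3 + z + 1 = 0 → ¬ ∃ m : ℕ, 0 < m ∧ z ^ m = 1) := by
  obtain ⟨z, habs, hroot⟩ := aux_root_mod_one
  have hz0 : z ≠ 0 := by
    intro h
    rw [h] at habs
    simp at habs
  refine ⟨?_, ?_, ⟨z, habs, hroot⟩, aux_no_root_of_unity⟩
  · -- nontrivial bounded solution
    refine ⟨fun n => z ^ n, ?_, ⟨1, ?_⟩, ?_⟩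
    · intro h
      have := congrFun h 0
      simp at this
    · intro n
      simp [norm_zpow, habs]
    · intro n
      have hterm : ∀ s : ℕ, z ^ (n + (s : ℤ)) = z ^ n * z ^ s := fun s => by
        rw [zpow_add₀ hz0, zpow_natCast]
      rw [show ({0, 1, 3, 5, 6} : Finset ℕ) = insert 0 (insert 1 (insert 3 (insert 5 {6}))) from
        rfl]
      rw [Finset.sum_insert (by decide), Finset.sum_insert (by decide),
        Finset.sum_insert (by decide), Finset.sum_insert (by decide), Finset.sum_singleton]
      simp only [hterm]
      set w := z ^ n with hw
      linear_combination w * hroot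
  · -- no nontrivial periodic solution
    rintro ⟨x, hxne, ⟨p, hp1, hper⟩, hrec⟩
    set t : ℕ := p.toNat with ht_def
    have htp : (t : ℤ) = p := Int.toNat_of_nonneg (by omega)
    have ht1 : 0 < t := by omega
    set Pc : ℂ[X] := X ^ 6 + X ^ 5 + X ^ 3 + X + 1 with hPc
    have hPS : (aeval auxS Pc) x = 0 := by
      funext n
      have h := hrec n
      rw [show ({0, 1, 3, 5, 6} : Finset ℕ) = insert 0 (insert 1 (insert 3 (insert 5 {6}))) from
        rfl] at h
      rw [Finset.sum_insert (by decide), Finset.sum_insert (by decide),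
        Finset.sum_insert (by decide), Finset.sum_insert (by decide),
        Finset.sum_singleton] at h
      push_cast at h
      simp only [hPc, map_add, map_pow, aeval_X, map_one, LinearMap.add_apply,
        Module.End.one_apply, Pi.add_apply, Pi.zero_apply]
      rw [auxS_pow, auxS_pow, auxS_pow]
      show x (n + (6 : ℕ)) + x (n + (5 : ℕ)) + x (n + (3 : ℕ)) + x (n + 1) + x n = 0
      push_cast
      simp only [add_zero] at h
      linear_combination h
    have hQS : (aeval auxS ((X : ℂ[X]) ^ t - 1)) x = 0 := by
      funext n
      simp only [map_sub, map_pow, aeval_X, map_one, LinearMap.sub_apply,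
        Module.End.one_apply, Pi.sub_apply, Pi.zero_apply]
      rw [auxS_pow, htp, hper n]
      exact sub_self _
    have hcop : IsCoprime Pc ((X : ℂ[X]) ^ t - 1) := by
      by_contra hnc
      rw [← EuclideanDomain.gcd_isUnit_iff] at hnc
      have hg0 : EuclideanDomain.gcd Pc ((X : ℂ[X]) ^ t - 1) ≠ 0 := by
        intro h
        rw [EuclideanDomain.gcd_eq_zero_iff] at h
        have := congrArg (eval 0) h.1
        simp [hPc] at this
      have hdegpos : 0 < (EuclideanDomain.gcd Pc ((X : ℂ[X]) ^ t - 1)).degree := by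
        rcases lt_or_ge 0 (EuclideanDomain.gcd Pc ((X : ℂ[X]) ^ t - 1)).degree with h | h
        · exact h
        · exact absurd (Polynomial.isUnit_iff_degree_eq_zero.2
            (le_antisymm h (Polynomial.zero_le_degree_iff.2 hg0))) hnc
      obtain ⟨w, hw⟩ := Complex.exists_root hdegpos
      have hw1 : Pc.IsRoot w := hw.dvd (EuclideanDomain.gcd_dvd_left _ _)
      have hw2 : ((X : ℂ[X]) ^ t - 1).IsRoot w := hw.dvd (EuclideanDomain.gcd_dvd_right _ _)
      have hw1' : w ^ 6 + w ^ 5 + w ^ 3 + w + 1 = 0 := by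
        simpa [hPc, Polynomial.IsRoot] using hw1
      have hw2' : w ^ t = 1 := by
        have := hw2
        simp only [Polynomial.IsRoot, Polynomial.eval_sub, Polynomial.eval_pow,
          Polynomial.eval_X, Polynomial.eval_one, sub_eq_zero] at this
        exact this
      exact aux_no_root_of_unity w hw1' ⟨t, ht1, hw2'⟩
    obtain ⟨u, v, huv⟩ := hcop
    have hx0 : x = 0 := by
      have h := congrArg (fun q : ℂ[X] => (aeval auxS q) x) huv
      simp only [map_add, map_mul, map_one, Module.End.mul_apply, Module.End.one_apply,
        LinearMap.add_apply] at h
      rw [hPS, hQS, map_zero, map_zero] at h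
      simpa using h.symm
    exact hxne hx0
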